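/- Let n ≥ 1 be an integer, p > 1, q > 1 with q ≠ 1, D ∈ 𝓜ₙ and u ∈ ℝⁿ. Then the q-Rényi entropy of f_p(D,u,·) equals S_q(f_p(D,u,·)) = (n/2)·log(π(2p−n(1−p))/(p−1)) + (1/(1−q))·log[ Γ(p/(p−1)+n/2)^q · Γ(q/(p−1)+1) / ( Γ(p/(p−1))^q · Γ(q/(p−1)+1+n/2) ) ] − (1/2)·log det D. -/

import Mathlib

open MeasureTheory Matrix

/-- Normalization constant `A_{n,p}` for `p > 1`. -/
noncomputable def gaussA (n : ℕ) (p : ℝ) : ℝ :=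
  ((p - 1) / (2 * p - n * (1 - p))) ^ ((n : ℝ) / 2) *
    Real.Gamma (p / (p - 1) + n / 2) /
    (Real.pi ^ ((n : ℝ) / 2) * Real.Gamma (p / (p - 1)))

/-- The `p`-Gaussian density for `p > 1`. -/
noncomputable def gaussF (n : ℕ) (p : ℝ) (D : Matrix (Fin n) (Fin n) ℝ)
    (u x : Fin n → ℝ) : ℝ :=
  if 0 ≤ 1 - (p - 1) / (2 * p - n * (1 - p)) * ((x - u) ⬝ᵥ D.mulVec (x - u)) then
    gaussA n p * Real.sqrt D.det *
      (1 - (p - 1) / (2 * p - n * (1 - p)) * ((x - u) ⬝ᵥ D.mulVec (x - u))) ^ (1 / (p - 1))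
  else 0

/-- The `q`-Rényi entropy of a density `g` on `ℝⁿ`. -/
noncomputable def renyi (n : ℕ) (q : ℝ) (g : (Fin n → ℝ) → ℝ) : ℝ :=
  1 / (1 - q) * Real.log (∫ x : Fin n → ℝ, g x ^ q)


section RenyiAux
open Real Set

lemma realBeta {a b : ℝ} (ha : 0 < a) (hb : 0 < b) :
    ∫ x in (0:ℝ)..1, x ^ (a - 1) * (1 - x) ^ (b - 1) =
      Real.Gamma a * Real.Gamma b / Real.Gamma (a + b) := by
  have h := Complex.Gamma_mul_Gamma_eq_betaIntegral (s := (a:ℂ)) (t := (b:ℂ))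
    (by simpa using ha) (by simpa using hb)
  have hbeta : Complex.betaIntegral a b =
      ((∫ x in (0:ℝ)..1, x ^ (a - 1) * (1 - x) ^ (b - 1) : ℝ) : ℂ) := by
    rw [Complex.betaIntegral, ← intervalIntegral.integral_ofReal]
    refine intervalIntegral.integral_congr fun x hx => ?_
    rw [uIcc_of_le zero_le_one] at hx
    have hx0 : (0:ℝ) ≤ x := hx.1
    have hx1 : (0:ℝ) ≤ 1 - x := by linarith [hx.2]
    rw [Complex.ofReal_mul, Complex.ofReal_cpow hx0, Complex.ofReal_cpow hx1]
    push_cast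
    ring_nf
  have hG : Complex.Gamma ((a:ℂ) + b) = ((Real.Gamma (a + b) : ℝ) : ℂ) := by
    rw [← Complex.ofReal_add, Complex.Gamma_ofReal]
  rw [hbeta, hG, Complex.Gamma_ofReal, Complex.Gamma_ofReal] at h
  have hne : Real.Gamma (a + b) ≠ 0 := (Real.Gamma_pos_of_pos (by linarith)).ne'
  have := h
  rw [← Complex.ofReal_mul, ← Complex.ofReal_mul, Complex.ofReal_inj] at this
  field_simp
  linarith [this]

lemma oneDim (n : ℕ) (hn : 1 ≤ n) {a s : ℝ} (ha : 0 < a) (hs : 0 < s) :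
    ∫ y in Ioi (0:ℝ),
        y ^ (n - 1) • (if 0 ≤ 1 - a * y ^ 2 then (1 - a * y ^ 2) ^ s else 0)
      = a ^ (-(n:ℝ)/2) *
          (Real.Gamma ((n:ℝ)/2) * Real.Gamma (s+1) / Real.Gamma ((n:ℝ)/2 + (s+1))) / 2 := by
  have hn0 : (0:ℝ) < (n:ℝ) := by exact_mod_cast hn
  set G : ℝ → ℝ := fun t => if 0 ≤ 1 - t then (1 - t) ^ s else 0 with hG
  set b : ℝ := Real.sqrt a with hbdef
  have hb : 0 < b := Real.sqrt_pos.mpr ha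
  have hb2 : b ^ 2 = a := Real.sq_sqrt ha.le
  set H : ℝ → ℝ := fun x => x ^ (n - 1) * G (x ^ 2) with hH
  -- Step C : the beta value
  have stepC : ∫ t in Ioi (0:ℝ), t ^ ((n:ℝ)/2 - 1) * G t =
      Real.Gamma ((n:ℝ)/2) * Real.Gamma (s+1) / Real.Gamma ((n:ℝ)/2 + (s+1)) := by
    have h1 : ∫ t in Ioi (0:ℝ), t ^ ((n:ℝ)/2 - 1) * G t
        = ∫ t in Ioc (0:ℝ) 1, t ^ ((n:ℝ)/2 - 1) * G t := by
      rw [← integral_indicator measurableSet_Ioi, ← integral_indicator measurableSet_Ioc]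
      congr 1; funext t
      by_cases h1 : t ∈ Ioc (0:ℝ) 1
      · rw [indicator_of_mem h1, indicator_of_mem (mem_Ioi.mpr h1.1)]
      · by_cases h2 : t ∈ Ioi (0:ℝ)
        · rw [indicator_of_mem h2, indicator_of_notMem h1]
          have ht1 : (1:ℝ) < t := by
            by_contra hle
            exact h1 ⟨mem_Ioi.mp h2, not_lt.mp hle⟩
          have hneg : ¬ (0 ≤ 1 - t) := by linarith
          simp only [hG]
          rw [if_neg hneg, mul_zero]
        · rw [indicator_of_notMem h1, indicator_of_notMem h2]
    rw [h1, ← intervalIntegral.integral_of_le zero_le_one]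
    have h2 : ∫ t in (0:ℝ)..1, t ^ ((n:ℝ)/2 - 1) * G t
        = ∫ t in (0:ℝ)..1, t ^ ((n:ℝ)/2 - 1) * (1 - t) ^ ((s+1) - 1) := by
      refine intervalIntegral.integral_congr fun t ht => ?_
      rw [uIcc_of_le zero_le_one] at ht
      have : 0 ≤ 1 - t := by linarith [ht.2]
      simp only [hG, if_pos this]
      norm_num
    rw [h2, realBeta (by positivity) (by linarith)]
  -- Step B : substitution t = x ^ 2
  have stepB : ∫ x in Ioi (0:ℝ), H x
      = (1/2) * ∫ t in Ioi (0:ℝ), t ^ ((n:ℝ)/2 - 1) * G t := by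
    have h2 : (2:ℝ) ≠ 0 := two_ne_zero
    calc ∫ x in Ioi (0:ℝ), H x
        = ∫ x in Ioi (0:ℝ), (|(2:ℝ)| * x ^ ((2:ℝ) - 1)) •
            ((2:ℝ)⁻¹ * ((x ^ (2:ℝ)) ^ ((n:ℝ)/2 - 1) * G (x ^ (2:ℝ)))) := by
          refine (setIntegral_congr_fun measurableSet_Ioi fun x hx => ?_).symm
          have hx0 : (0:ℝ) < x := hx
          have hxsq : x ^ ((2:ℝ)) = x ^ 2 := by
            rw [show ((2:ℝ)) = ((2:ℕ):ℝ) by norm_num, Real.rpow_natCast]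
          have hpow : (x ^ 2) ^ ((n:ℝ)/2 - 1) = x ^ ((n:ℝ) - 2) := by
            rw [← Real.rpow_natCast x 2, ← Real.rpow_mul hx0.le]
            norm_num
            ring_nf
          have hxn : x * x ^ ((n:ℝ) - 2) = x ^ (n - 1) := by
            have e1 : x ^ ((1:ℝ) + ((n:ℝ) - 2)) = x * x ^ ((n:ℝ) - 2) := by
              rw [Real.rpow_add hx0, Real.rpow_one]
            rw [← e1, ← Real.rpow_natCast x (n-1)]
            congr 1
            rw [Nat.cast_sub hn]
            push_cast; ring
          have hx21 : x ^ ((2:ℝ) - 1) = x := by norm_num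
          simp only [smul_eq_mul, hxsq, hpow, hx21, abs_of_pos (show (0:ℝ) < 2 by norm_num),
            hH]
          rw [← hxn]
          ring
      _ = ∫ t in Ioi (0:ℝ), (2:ℝ)⁻¹ * (t ^ ((n:ℝ)/2 - 1) * G t) := by
          simpa using integral_comp_rpow_Ioi
            (fun t => (2:ℝ)⁻¹ * (t ^ ((n:ℝ)/2 - 1) * G t)) h2
      _ = (1/2) * ∫ t in Ioi (0:ℝ), t ^ ((n:ℝ)/2 - 1) * G t := by
          rw [integral_const_mul]; norm_num
  -- Step A : scaling
  have hptwise : ∀ y : ℝ, y ^ (n - 1) * G (a * y ^ 2) = (b⁻¹) ^ (n - 1) * H (b * y) := by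
    intro y
    simp only [hH, mul_pow, inv_pow]
    rw [hb2]
    have hbn : (b:ℝ) ^ (n-1) ≠ 0 := pow_ne_zero _ hb.ne'
    field_simp
  have stepA : ∫ y in Ioi (0:ℝ), y ^ (n - 1) * G (a * y ^ 2)
      = (b⁻¹) ^ n * ∫ x in Ioi (0:ℝ), H x := by
    simp_rw [hptwise]
    rw [integral_const_mul]
    have h3 := integral_comp_mul_left_Ioi H 0 hb
    rw [mul_zero] at h3
    rw [h3, smul_eq_mul]
    have hbn : (b⁻¹) ^ n = (b⁻¹) ^ (n - 1) * b⁻¹ := by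
      rw [← pow_succ, Nat.sub_add_cancel hn]
    rw [hbn]; ring
  have hfinal : (b⁻¹ : ℝ) ^ n = a ^ (-(n:ℝ)/2) := by
    rw [inv_pow, hbdef, Real.sqrt_eq_rpow, ← Real.rpow_natCast (a ^ ((1:ℝ)/2)) n,
      ← Real.rpow_mul ha.le, ← Real.rpow_neg ha.le]
    congr 1; ring
  have h0 : ∫ y in Ioi (0:ℝ),
        y ^ (n - 1) • (if 0 ≤ 1 - a * y ^ 2 then (1 - a * y ^ 2) ^ s else 0)
      = ∫ y in Ioi (0:ℝ), y ^ (n - 1) * G (a * y ^ 2) := by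
    simp only [hG, smul_eq_mul]
  rw [h0, stepA, stepB, stepC, hfinal]
  ring

lemma nDim (n : ℕ) (hn : 1 ≤ n) {a s : ℝ} (ha : 0 < a) (hs : 0 < s) :
    ∫ z : Fin n → ℝ, (if 0 ≤ 1 - a * (z ⬝ᵥ z) then (1 - a * (z ⬝ᵥ z)) ^ s else 0)
      = Real.pi ^ ((n:ℝ)/2) * a ^ (-(n:ℝ)/2) *
          (Real.Gamma (s+1) / Real.Gamma ((n:ℝ)/2 + (s+1))) := by
  haveI : Nonempty (Fin n) := Fin.pos_iff_nonempty.mp hn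
  haveI : Nontrivial (EuclideanSpace ℝ (Fin n)) := by
    refine ⟨0, EuclideanSpace.single ⟨0, hn⟩ 1, ?_⟩
    intro h
    have := congrArg (fun v => v ⟨0, hn⟩) h.symm
    simp [EuclideanSpace.single] at this
  set ψ : (Fin n → ℝ) → ℝ :=
    fun z => if 0 ≤ 1 - a * (z ⬝ᵥ z) then (1 - a * (z ⬝ᵥ z)) ^ s else 0 with hψ
  set Φ : ℝ → ℝ := fun r => if 0 ≤ 1 - a * r ^ 2 then (1 - a * r ^ 2) ^ s else 0 with hΦ
  have hmp := EuclideanSpace.volume_preserving_symm_measurableEquiv_toLp (Fin n)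
  have step1 : ∫ z : Fin n → ℝ, ψ z = ∫ w : EuclideanSpace ℝ (Fin n), Φ ‖w‖ := by
    rw [← hmp.integral_comp' ψ]
    refine integral_congr_ae (Filter.Eventually.of_forall fun w => ?_)
    have hdot : ((MeasurableEquiv.toLp 2 (Fin n → ℝ)).symm w) ⬝ᵥ
        ((MeasurableEquiv.toLp 2 (Fin n → ℝ)).symm w) = ‖w‖ ^ 2 := by
      rw [EuclideanSpace.norm_eq, Real.sq_sqrt (by positivity)]
      simp only [dotProduct, Real.norm_eq_abs, sq_abs]
      exact Finset.sum_congr rfl fun i _ => by rw [sq]; rfl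
    simp only [hψ, hΦ, hdot]
  have step2 : ∫ w : EuclideanSpace ℝ (Fin n), Φ ‖w‖
      = n • (volume (Metric.ball (0 : EuclideanSpace ℝ (Fin n)) 1)).toReal •
          ∫ y in Ioi (0:ℝ), y ^ (n - 1) • Φ y := by
    have := MeasureTheory.integral_fun_norm_addHaar
      (volume : Measure (EuclideanSpace ℝ (Fin n))) Φ
    simpa [finrank_euclideanSpace_fin, Measure.real] using this
  have hvol : (volume (Metric.ball (0 : EuclideanSpace ℝ (Fin n)) 1)).toReal
      = Real.sqrt π ^ n / Real.Gamma ((n:ℝ) / 2 + 1) := by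
    rw [EuclideanSpace.volume_ball]
    simp only [Fintype.card_fin, ENNReal.ofReal_one, one_pow, one_mul]
    rw [ENNReal.toReal_ofReal (by positivity)]
  have h1d := oneDim n hn ha hs
  rw [step1, step2, hvol, h1d]
  have hsqpi : Real.sqrt π ^ n = π ^ ((n:ℝ)/2) := by
    rw [Real.sqrt_eq_rpow, ← Real.rpow_natCast (π ^ ((1:ℝ)/2)) n, ← Real.rpow_mul pi_pos.le]
    congr 1; ring
  have hng : Real.Gamma ((n:ℝ)/2 + 1) = ((n:ℝ)/2) * Real.Gamma ((n:ℝ)/2) := by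
    rw [Real.Gamma_add_one (by positivity)]
  have hn0 : (0:ℝ) < (n:ℝ) := by exact_mod_cast hn
  have hg1 : 0 < Real.Gamma ((n:ℝ)/2) := Real.Gamma_pos_of_pos (by positivity)
  have hg2 : 0 < Real.Gamma ((n:ℝ)/2 + (s+1)) := Real.Gamma_pos_of_pos (by positivity)
  rw [nsmul_eq_mul, smul_eq_mul, hsqpi, hng]
  field_simp

open scoped MatrixOrder in
lemma matDim (n : ℕ) (hn : 1 ≤ n) {a s : ℝ} (ha : 0 < a) (hs : 0 < s)
    (D : Matrix (Fin n) (Fin n) ℝ) (hD : D.PosDef) (u : Fin n → ℝ) :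
    ∫ x : Fin n → ℝ, (if 0 ≤ 1 - a * ((x - u) ⬝ᵥ D.mulVec (x - u)) then
        (1 - a * ((x - u) ⬝ᵥ D.mulVec (x - u))) ^ s else 0)
      = (Real.sqrt D.det)⁻¹ * (Real.pi ^ ((n:ℝ)/2) * a ^ (-(n:ℝ)/2) *
          (Real.Gamma (s+1) / Real.Gamma ((n:ℝ)/2 + (s+1)))) := by
  classical
  set ψ : (Fin n → ℝ) → ℝ :=
    fun z => if 0 ≤ 1 - a * (z ⬝ᵥ z) then (1 - a * (z ⬝ᵥ z)) ^ s else 0 with hψ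
  set φ : (Fin n → ℝ) → ℝ :=
    fun y => if 0 ≤ 1 - a * (y ⬝ᵥ D.mulVec y) then (1 - a * (y ⬝ᵥ D.mulVec y)) ^ s else 0
    with hφ
  -- translation
  have htrans : ∫ x : Fin n → ℝ, φ (x - u) = ∫ y : Fin n → ℝ, φ y :=
    integral_sub_right_eq_self φ u
  -- the square root of D
  set S : Matrix (Fin n) (Fin n) ℝ := CFC.sqrt D with hSdef
  have hS2 : S * S = D := CFC.sqrt_mul_sqrt_self D hD.posSemidef.nonneg
  have hSh : Sᴴ = S := (CFC.sqrt_nonneg D).posSemidef.isHermitian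
  have hST : Sᵀ = S := by rwa [← conjTranspose_eq_transpose_of_trivial]
  have hdetD : 0 < D.det := hD.det_pos
  have hdetS2 : S.det ^ 2 = D.det := by rw [← hS2, det_mul, sq]
  have hdetSne : S.det ≠ 0 := by
    intro h
    rw [← hdetS2, h] at hdetD
    simp at hdetD
  have habs : |S.det| = Real.sqrt D.det := by
    rw [← hdetS2, Real.sqrt_sq_eq_abs]
  -- quadratic form identity
  have hquad : ∀ y : Fin n → ℝ, y ⬝ᵥ D.mulVec y = (S *ᵥ y) ⬝ᵥ (S *ᵥ y) := by
    intro y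
    rw [← hS2, ← Matrix.mulVec_mulVec, Matrix.dotProduct_mulVec]
    congr 1
    rw [← hST, Matrix.mulVec_transpose, hST]
  -- measurability of ψ
  have hcont : Continuous fun z : Fin n → ℝ => 1 - a * (z ⬝ᵥ z) := by
    apply Continuous.sub continuous_const
    apply Continuous.mul continuous_const
    unfold dotProduct
    exact continuous_finset_sum _ fun i _ =>
      ((continuous_apply i).mul (continuous_apply i))
  have hψm : Measurable ψ := by
    apply Measurable.ite (measurableSet_le measurable_const hcont.measurable)
    · exact (Real.continuous_rpow_const hs.le).measurable.comp hcont.measurable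
    · exact measurable_const
  -- change of variables
  have hLdet : LinearMap.det (Matrix.toLin' S) = S.det := LinearMap.det_toLin' S
  have hLdetne : LinearMap.det (Matrix.toLin' S) ≠ 0 := by rwa [hLdet]
  have hmap := Measure.map_linearMap_addHaar_eq_smul_addHaar
    (volume : Measure (Fin n → ℝ)) hLdetne
  have hLcont : Continuous (Matrix.toLin' S) := LinearMap.continuous_of_finiteDimensional _
  have hcv : ∫ y : Fin n → ℝ, ψ (S *ᵥ y) = (Real.sqrt D.det)⁻¹ * ∫ z : Fin n → ℝ, ψ z := by
    have h1 : ∫ y : Fin n → ℝ, ψ (S *ᵥ y) = ∫ y : Fin n → ℝ, ψ (Matrix.toLin' S y) := by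
      simp_rw [Matrix.toLin'_apply]
    have h2 : ∫ z, ψ z ∂(Measure.map (Matrix.toLin' S) volume)
        = ∫ y : Fin n → ℝ, ψ (Matrix.toLin' S y) :=
      integral_map hLcont.measurable.aemeasurable hψm.aestronglyMeasurable
    rw [h1, ← h2, hmap, integral_smul_measure, hLdet,
      ENNReal.toReal_ofReal (abs_nonneg _), abs_inv, habs, smul_eq_mul]
  calc ∫ x : Fin n → ℝ, φ (x - u) = ∫ y : Fin n → ℝ, φ y := htrans
    _ = ∫ y : Fin n → ℝ, ψ (S *ᵥ y) := by
        refine integral_congr_ae (Filter.Eventually.of_forall fun y => ?_)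
        simp only [hφ, hψ, hquad y]
    _ = (Real.sqrt D.det)⁻¹ * ∫ z : Fin n → ℝ, ψ z := hcv
    _ = _ := by rw [nDim n hn ha hs]

end RenyiAux

/-- `q`-Rényi entropy of the `p`-Gaussian for `p > 1`, `q > 1`. -/
theorem renyi_gaussF (n : ℕ) (hn : 1 ≤ n) (p q : ℝ) (hp : 1 < p) (hq : 1 < q) (hq1 : q ≠ 1)
    (D : Matrix (Fin n) (Fin n) ℝ) (hD : D.PosDef) (u : Fin n → ℝ) :
    renyi n q (gaussF n p D u) =
      (n / 2) * Real.log (Real.pi * (2 * p - n * (1 - p)) / (p - 1)) +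
        1 / (1 - q) * Real.log
          (Real.Gamma (p / (p - 1) + n / 2) ^ q * Real.Gamma (q / (p - 1) + 1) /
            (Real.Gamma (p / (p - 1)) ^ q * Real.Gamma (q / (p - 1) + 1 + n / 2))) -
        (1 / 2) * Real.log D.det := by
  have hn0 : (0:ℝ) < n := by exact_mod_cast hn
  have hp1 : (0:ℝ) < p - 1 := by linarith
  have hc : (0:ℝ) < 2 * p - n * (1 - p) := by nlinarith
  have ha : (0:ℝ) < (p - 1) / (2 * p - n * (1 - p)) := div_pos hp1 hc
  have hs : (0:ℝ) < q / (p - 1) := div_pos (by linarith) hp1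
  have hdet : 0 < D.det := hD.det_pos
  have hsd : 0 < Real.sqrt D.det := Real.sqrt_pos.mpr hdet
  have hp' : (0:ℝ) < p / (p - 1) := div_pos (by linarith) hp1
  have hG1 : 0 < Real.Gamma (p / (p - 1) + n / 2) := Real.Gamma_pos_of_pos (by positivity)
  have hG2 : 0 < Real.Gamma (p / (p - 1)) := Real.Gamma_pos_of_pos hp'
  have hGs1 : 0 < Real.Gamma (q / (p - 1) + 1) := Real.Gamma_pos_of_pos (by positivity)
  have hGs2 : 0 < Real.Gamma ((n:ℝ)/2 + (q / (p - 1) + 1)) :=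
    Real.Gamma_pos_of_pos (by positivity)
  have hA : 0 < gaussA n p := by
    unfold gaussA
    have h1 : (0:ℝ) < ((p - 1) / (2 * p - n * (1 - p))) ^ ((n:ℝ)/2) :=
      Real.rpow_pos_of_pos ha _
    have h3 : (0:ℝ) < Real.pi ^ ((n:ℝ)/2) := Real.rpow_pos_of_pos Real.pi_pos _
    positivity
  have hq0 : q ≠ 0 := by positivity
  have hC : 0 < gaussA n p * Real.sqrt D.det := mul_pos hA hsd
  -- pointwise identity
  have hpt : ∀ x : Fin n → ℝ, gaussF n p D u x ^ q =
      (gaussA n p * Real.sqrt D.det) ^ q *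
        (if 0 ≤ 1 - (p - 1) / (2 * p - n * (1 - p)) * ((x - u) ⬝ᵥ D.mulVec (x - u)) then
          (1 - (p - 1) / (2 * p - n * (1 - p)) * ((x - u) ⬝ᵥ D.mulVec (x - u))) ^ (q / (p - 1))
        else 0) := by
    intro x
    unfold gaussF
    by_cases h : 0 ≤ 1 - (p - 1) / (2 * p - n * (1 - p)) * ((x - u) ⬝ᵥ D.mulVec (x - u))
    · rw [if_pos h, if_pos h, Real.mul_rpow (by positivity) (Real.rpow_nonneg h _),
        ← Real.rpow_mul h]
      congr 1
      ring
    · rw [if_neg h, if_neg h, mul_zero, Real.zero_rpow hq0]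
  have hint : ∫ x : Fin n → ℝ, gaussF n p D u x ^ q
      = (gaussA n p * Real.sqrt D.det) ^ q * ((Real.sqrt D.det)⁻¹ *
          (Real.pi ^ ((n:ℝ)/2) * ((p - 1) / (2 * p - n * (1 - p))) ^ (-(n:ℝ)/2) *
            (Real.Gamma (q / (p - 1) + 1) / Real.Gamma ((n:ℝ)/2 + (q / (p - 1) + 1))))) := by
    simp_rw [hpt]
    rw [integral_const_mul, matDim n hn ha hs D hD u]
  unfold renyi
  rw [hint]
  -- logs
  have hKpos : (0:ℝ) < Real.pi ^ ((n:ℝ)/2) * ((p - 1) / (2 * p - n * (1 - p))) ^ (-(n:ℝ)/2) *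
      (Real.Gamma (q / (p - 1) + 1) / Real.Gamma ((n:ℝ)/2 + (q / (p - 1) + 1))) := by
    have h3 : (0:ℝ) < Real.pi ^ ((n:ℝ)/2) := Real.rpow_pos_of_pos Real.pi_pos _
    have h4 : (0:ℝ) < ((p - 1) / (2 * p - n * (1 - p))) ^ (-(n:ℝ)/2) :=
      Real.rpow_pos_of_pos ha _
    positivity
  rw [Real.log_mul (Real.rpow_pos_of_pos hC q).ne' (by positivity),
    Real.log_rpow hC, Real.log_mul hA.ne' hsd.ne',
    Real.log_mul (by positivity) hKpos.ne', Real.log_inv, Real.log_sqrt hdet.le,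
    Real.log_mul (by positivity : (Real.pi ^ ((n:ℝ)/2) *
        ((p - 1) / (2 * p - n * (1 - p))) ^ (-(n:ℝ)/2) : ℝ) ≠ 0) (by positivity),
    Real.log_mul (by positivity : (Real.pi ^ ((n:ℝ)/2) : ℝ) ≠ 0) (by positivity),
    Real.log_rpow Real.pi_pos, Real.log_rpow ha,
    Real.log_div hGs1.ne' hGs2.ne']
  have hlogA : Real.log (gaussA n p) =
      ((n:ℝ)/2) * Real.log ((p - 1) / (2 * p - n * (1 - p)))
        + Real.log (Real.Gamma (p / (p - 1) + n / 2))
        - (((n:ℝ)/2) * Real.log Real.pi + Real.log (Real.Gamma (p / (p - 1)))) := by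
    unfold gaussA
    rw [Real.log_div (by positivity) (by positivity),
      Real.log_mul (by positivity) hG1.ne',
      Real.log_mul (by positivity) hG2.ne',
      Real.log_rpow ha, Real.log_rpow Real.pi_pos]
  rw [hlogA]
  -- RHS logs
  have hR1 : Real.log (Real.pi * (2 * p - n * (1 - p)) / (p - 1)) =
      Real.log Real.pi - Real.log ((p - 1) / (2 * p - n * (1 - p))) := by
    rw [show Real.pi * (2 * p - n * (1 - p)) / (p - 1)
        = Real.pi / ((p - 1) / (2 * p - n * (1 - p))) by field_simp,
      Real.log_div Real.pi_ne_zero ha.ne']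
  have hR2 : Real.log
      (Real.Gamma (p / (p - 1) + n / 2) ^ q * Real.Gamma (q / (p - 1) + 1) /
        (Real.Gamma (p / (p - 1)) ^ q * Real.Gamma (q / (p - 1) + 1 + n / 2))) =
      q * Real.log (Real.Gamma (p / (p - 1) + n / 2)) + Real.log (Real.Gamma (q / (p - 1) + 1))
        - (q * Real.log (Real.Gamma (p / (p - 1)))
            + Real.log (Real.Gamma ((n:ℝ)/2 + (q / (p - 1) + 1)))) := by
    rw [show q / (p - 1) + 1 + (n:ℝ) / 2 = (n:ℝ)/2 + (q / (p - 1) + 1) by ring,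
      Real.log_div (by positivity) (by positivity),
      Real.log_mul (by positivity) hGs1.ne',
      Real.log_mul (by positivity) hGs2.ne',
      Real.log_rpow hG1, Real.log_rpow hG2]
  rw [hR1, hR2]
  have h1q : (1:ℝ) - q ≠ 0 := sub_ne_zero.mpr (Ne.symm hq1)
  field_simp
  ring
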